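/- Let d ≥ 2, let Q be a partition of [d], and let P be a partition of [d] that is not finer than Q. Then the tensor Δ_P : [n]^d → 𝔽 has {Q}-rank at least n, i.e., whenever Σ_{i=1}^k ∏_{J∈Q} a_{J,i}(x(J)) = Δ_P(x) for all x ∈ [n]^d, we have k ≥ n. -/

import Mathlib

open Finset

/-- `P` is a partition of `[d] = Fin d`: parts are non-empty, pairwise disjoint,
and their union is all of `Fin d`. -/
def IsPartitionOn (d : ℕ) (P : Finset (Finset (Fin d))) : Prop :=
  (∀ J ∈ P, J.Nonempty) ∧
  (∀ J ∈ P, ∀ K ∈ P, J ≠ K → Disjoint J K) ∧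
  P.sup id = Finset.univ

/-- `P` is finer than `Q`: every part of `P` is contained in some part of `Q`. -/
def Finer {d : ℕ} (P Q : Finset (Finset (Fin d))) : Prop :=
  ∀ J ∈ P, ∃ K ∈ Q, J ⊆ K

/-- Least common refinement of two partitions. -/
def partMeet {d : ℕ} (P Q : Finset (Finset (Fin d))) : Finset (Finset (Fin d)) :=
  ((P ×ˢ Q).image fun p => p.1 ∩ p.2).filter fun J => J.Nonempty

/-- Least common refinement of two families of partitions. -/
def famMeet {d : ℕ} (R₁ R₂ : Finset (Finset (Finset (Fin d)))) :
    Finset (Finset (Finset (Fin d))) :=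
  (R₁ ×ˢ R₂).image fun p => partMeet p.1 p.2

/-- `R₂ ≺ R₁` for families of partitions. -/
def FamFiner {d : ℕ} (R₂ R₁ : Finset (Finset (Finset (Fin d)))) : Prop :=
  ∀ P ∈ R₂, ∃ Q ∈ R₁, Finer P Q

/-- `R` is a non-empty family of partitions of `[d]`. -/
def IsPartitionFamily (d : ℕ) (R : Finset (Finset (Finset (Fin d)))) : Prop :=
  R.Nonempty ∧ ∀ P ∈ R, IsPartitionOn d P

variable {F : Type*} [Field F]

/-- `f` depends only on the coordinates in `J`. -/
def DependsOnlyOn {d : ℕ} {n : Fin d → ℕ} (f : (∀ j, Fin (n j)) → F)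
    (J : Finset (Fin d)) : Prop :=
  ∀ x y : ∀ j, Fin (n j), (∀ j ∈ J, x j = y j) → f x = f y

/-- `T` has `R`-rank at most 1. -/
def RankOne {d : ℕ} {n : Fin d → ℕ} (R : Finset (Finset (Finset (Fin d))))
    (T : (∀ j, Fin (n j)) → F) : Prop :=
  ∃ P ∈ R, ∃ a : Finset (Fin d) → ((∀ j, Fin (n j)) → F),
    (∀ J ∈ P, DependsOnlyOn (a J) J) ∧ ∀ x, T x = ∏ J ∈ P, a J x

/-- `T` has `R`-rank at most `k`. -/
def RRankLE {d : ℕ} {n : Fin d → ℕ} (R : Finset (Finset (Finset (Fin d))))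
    (T : (∀ j, Fin (n j)) → F) (k : ℕ) : Prop :=
  ∃ c : Fin k → ((∀ j, Fin (n j)) → F),
    (∀ i, RankOne R (c i)) ∧ ∀ x, T x = ∑ i, c i x

open Classical in
/-- The tensor `Δ_P`, the product of the identity tensors on the parts of `P`. -/
noncomputable def DeltaP {d n : ℕ} (P : Finset (Finset (Fin d))) :
    (Fin d → Fin n) → F :=
  fun x => if ∀ J ∈ P, ∀ j₁ ∈ J, ∀ j₂ ∈ J, x j₁ = x j₂ then 1 else 0


section Aux
open Matrix
variable {F : Type*} [Field F]

lemma myrank_vecMulVec_le {n : ℕ} (w v : Fin n → F) :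
    (Matrix.vecMulVec w v).rank ≤ 1 := by
  classical
  rw [Matrix.rank_eq_finrank_span_cols]
  have hle : Submodule.span F (Set.range (Matrix.vecMulVec w v)ᵀ) ≤
      Submodule.span F ({w} : Set (Fin n → F)) := by
    rw [Submodule.span_le]
    rintro _ ⟨j, rfl⟩
    have : (Matrix.vecMulVec w v)ᵀ j = v j • w := by
      ext u; simp [Matrix.vecMulVec, mul_comm]
    rw [this]
    exact Submodule.smul_mem _ _ (Submodule.mem_span_singleton_self w)
  calc Module.finrank F (Submodule.span F (Set.range (Matrix.vecMulVec w v)ᵀ))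
      ≤ Module.finrank F (Submodule.span F ({w} : Set (Fin n → F))) :=
        Submodule.finrank_mono hle
    _ ≤ 1 := by
        rcases eq_or_ne w 0 with rfl | hw
        · rw [show ({(0 : Fin n → F)} : Set (Fin n → F)) = ↑(⊥ : Submodule F (Fin n → F)) by simp,
            Submodule.span_coe_eq_restrictScalars]
          simp
          exact (finrank_bot F _).le.trans zero_le_one
        · rw [finrank_span_singleton hw]

lemma myrank_add_le {n : ℕ} (A B : Matrix (Fin n) (Fin n) F) :
    (A + B).rank ≤ A.rank + B.rank := by
  classical
  rw [Matrix.rank, Matrix.rank, Matrix.rank, Matrix.mulVecLin_add]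
  have hr : LinearMap.range (A.mulVecLin + B.mulVecLin) ≤
      LinearMap.range A.mulVecLin ⊔ LinearMap.range B.mulVecLin := by
    rintro _ ⟨x, rfl⟩
    exact Submodule.add_mem_sup ⟨x, rfl⟩ ⟨x, rfl⟩
  exact (Submodule.finrank_mono hr).trans
    (Submodule.finrank_add_le_finrank_add_finrank _ _)

lemma myrank_sum_le {n k : ℕ} (A : Fin k → Matrix (Fin n) (Fin n) F) (s : Finset (Fin k)) :
    (∑ i ∈ s, A i).rank ≤ ∑ i ∈ s, (A i).rank := by
  classical
  induction s using Finset.induction_on with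
  | empty => simp
  | insert _ _ hi ih =>
    rename_i a s _
    rw [Finset.sum_insert hi, Finset.sum_insert hi]
    exact (myrank_add_le _ _).trans (by omega)

end Aux

theorem deltaP_singleQ_lower_bound {d n : ℕ} (hd : 2 ≤ d) (hn : 1 ≤ n)
    (P Q : Finset (Finset (Fin d)))
    (hP : IsPartitionOn d P) (hQ : IsPartitionOn d Q)
    (hfin : ¬ Finer P Q) (k : ℕ)
    (h : RRankLE (n := fun _ => n) ({Q} : Finset (Finset (Finset (Fin d))))
      (DeltaP P : (Fin d → Fin n) → F) k) :
    n ≤ k := by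
  classical
  obtain ⟨c, hc, hsum⟩ := h
  have hax : ∀ i, ∃ a : Finset (Fin d) → ((Fin d → Fin n) → F),
      (∀ J ∈ Q, DependsOnlyOn (a J) J) ∧ ∀ x, c i x = ∏ J ∈ Q, a J x := by
    intro i
    obtain ⟨P', hP', a, ha, hx⟩ := hc i
    rw [Finset.mem_singleton] at hP'
    subst hP'
    exact ⟨a, ha, hx⟩
  choose a ha haeq using hax
  -- find a part J₀ of P not contained in any part of Q
  rw [Finer] at hfin
  push_neg at hfin
  obtain ⟨J₀, hJ₀P, hJ₀⟩ := hfin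
  obtain ⟨j₁, hj₁⟩ := hP.1 J₀ hJ₀P
  -- find the part K₁ of Q containing j₁
  have hj₁u : j₁ ∈ Q.sup id := hQ.2.2 ▸ Finset.mem_univ j₁
  rw [Finset.mem_sup] at hj₁u
  obtain ⟨K₁, hK₁Q, hj₁K₁⟩ := hj₁u
  simp only [id_eq] at hj₁K₁
  have hnot : ¬ J₀ ⊆ K₁ := hJ₀ K₁ hK₁Q
  obtain ⟨j₂, hj₂J₀, hj₂K₁⟩ := Finset.not_subset.mp hnot
  -- the substitution
  set φ : Fin n → Fin n → (Fin d → Fin n) :=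
    fun u v j => if j ∈ K₁ then u else v with hφ
  set f : Fin k → Fin n → F := fun i u => a i K₁ (fun _ => u) with hf
  set g : Fin k → Fin n → F := fun i v => ∏ K ∈ Q.erase K₁, a i K (fun _ => v) with hg
  have hci : ∀ i u v, c i (φ u v) = f i u * g i v := by
    intro i u v
    rw [haeq i (φ u v), ← Finset.mul_prod_erase Q _ hK₁Q]
    congr 1
    · exact ha i K₁ hK₁Q _ _ (fun j hj => by simp [hφ, hj])
    · refine Finset.prod_congr rfl fun K hK => ?_
      have hKQ := Finset.mem_of_mem_erase hK
      have hne := Finset.ne_of_mem_erase hK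
      have hdisj := hQ.2.1 K hKQ K₁ hK₁Q hne
      refine ha i K hKQ _ _ fun j hj => ?_
      have hjK₁ : j ∉ K₁ := Finset.disjoint_left.mp hdisj hj
      simp [hφ, hjK₁]
  have hΔ : ∀ u v : Fin n, (DeltaP P (φ u v) : F) = if u = v then 1 else 0 := by
    intro u v
    unfold DeltaP
    rcases eq_or_ne u v with rfl | huv
    · rw [if_pos rfl, if_pos]
      intro J _ a _ b _
      simp only [hφ]
      split <;> split <;> rfl
    · rw [if_neg huv, if_neg]
      intro hcon
      have := hcon J₀ hJ₀P j₁ hj₁ j₂ hj₂J₀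
      simp only [hφ] at this
      rw [if_pos hj₁K₁, if_neg hj₂K₁] at this
      exact huv this
  -- build the matrix identity
  have hmat : (1 : Matrix (Fin n) (Fin n) F) = ∑ i, Matrix.vecMulVec (f i) (g i) := by
    ext u v
    rw [Matrix.sum_apply]
    simp only [Matrix.vecMulVec_apply, Matrix.one_apply]
    rw [← hΔ u v, hsum (φ u v)]
    exact Finset.sum_congr rfl fun i _ => hci i u v
  have h1 : (1 : Matrix (Fin n) (Fin n) F).rank = n := by
    rw [Matrix.rank_one, Fintype.card_fin]
  calc n = (1 : Matrix (Fin n) (Fin n) F).rank := h1.symm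
    _ = (∑ i, Matrix.vecMulVec (f i) (g i)).rank := by rw [hmat]
    _ ≤ ∑ i : Fin k, (Matrix.vecMulVec (f i) (g i)).rank := myrank_sum_le _ _
    _ ≤ ∑ i : Fin k, 1 := Finset.sum_le_sum fun i _ => myrank_vecMulVec_le _ _
    _ = k := by simp
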